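/- Let w₀ ∈ ℝ, λ ≥ 0, and let w : [0,T] → ℝ solve the multiterm fractional IVP Σᵢ q_i(t) D_t^{α_i} w + λ w = v with w(0) = w₀, under the comparison-principle hypotheses. If also a function ℰ satisfies ℰ(0) ≥ |w₀| and Σᵢ q_i(t) D_t^{α_i} ℰ(t) + λ ℰ(t) ≥ |v(t)| for all t ∈ (0,T], then |w(t)| ≤ ℰ(t) for all t ∈ [0,T]. -/

import Mathlib

open MeasureTheory Set intervalIntegral

/-- Reformulated Caputo derivative of order `α ∈ (0,1)` at time `t`. -/
noncomputable def caputoR (α : ℝ) (w : ℝ → ℝ) (t : ℝ) : ℝ :=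
  (1 / Real.Gamma (1 - α)) *
    (t ^ (-α) * (w t - w 0)
      + ∫ s in (0:ℝ)..t, α * (t - s) ^ (-α - 1) * (w t - w s))

/-- Caputo derivative of order `α ∈ (0,1]`. -/
noncomputable def caputoD (α : ℝ) (w : ℝ → ℝ) (t : ℝ) : ℝ :=
  if α = 1 then deriv w t else caputoR α w t

open Topology Filter
open scoped ENNReal NNReal

lemma kernelIntegrable {a t₁ T : ℝ} {f : ℝ → ℝ} (ha : 0 < a) (ha1 : a < 1)
    (ht : 0 < t₁) (htT : t₁ ≤ T) (hf : ContinuousOn f (Icc 0 T))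
    (C : NNReal) (hlip : LipschitzOnWith C f (Icc (t₁/2) t₁)) :
    IntervalIntegrable (fun s => a * (t₁ - s) ^ (-a - 1) * (f t₁ - f s)) volume 0 t₁ := by
  have h2 : (0:ℝ) < t₁ / 2 := by linarith
  have h2' : t₁ / 2 < t₁ := by linarith
  apply IntervalIntegrable.trans (b := t₁ / 2)
  · -- continuous on [0, t₁/2]
    apply ContinuousOn.intervalIntegrable
    rw [uIcc_of_le (by linarith)]
    apply ContinuousOn.mul
    · apply ContinuousOn.mul continuousOn_const
      apply ContinuousOn.rpow_const
      · exact (continuous_const.sub continuous_id).continuousOn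
      · intro s hs
        left
        have : s ≤ t₁ / 2 := hs.2
        intro h0
        have : t₁ - s = 0 := h0
        linarith
    · apply ContinuousOn.sub continuousOn_const
      exact hf.mono (fun s hs => ⟨hs.1, by linarith [hs.2]⟩)
  · -- dominated on [t₁/2, t₁]
    rw [intervalIntegrable_iff_integrableOn_Ioc_of_le (le_of_lt h2')]
    have hres : volume.restrict (Ioc (t₁/2) t₁) = volume.restrict (Ioo (t₁/2) t₁) :=
      (Measure.restrict_congr_set Ioo_ae_eq_Ioc).symm
    -- dominating function
    have hg : IntegrableOn (fun s => a * C * (t₁ - s) ^ (-a)) (Ioc (t₁/2) t₁) volume := by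
      have h1 : IntervalIntegrable (fun x : ℝ => x ^ (-a)) volume 0 (t₁/2) :=
        intervalIntegral.intervalIntegrable_rpow' (by linarith)
      have h2'' := ((h1.comp_sub_left t₁).const_mul (a * C)).symm
      rw [intervalIntegrable_iff_integrableOn_Ioc_of_le (by linarith)] at h2''
      exact h2''.mono_set (by
        intro x hx
        constructor <;> [linarith [hx.1]; linarith [hx.2]])
    apply Integrable.mono hg
    · -- AEStronglyMeasurable
      rw [hres]
      apply ContinuousOn.aestronglyMeasurable _ measurableSet_Ioo
      apply ContinuousOn.mul
      · apply ContinuousOn.mul continuousOn_const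
        apply ContinuousOn.rpow_const
        · exact (continuous_const.sub continuous_id).continuousOn
        · intro s hs
          left
          intro h0
          have : t₁ - s = 0 := h0
          have := hs.2
          linarith
      · apply ContinuousOn.sub continuousOn_const
        exact hf.mono (fun s hs => ⟨by linarith [hs.1], by linarith [hs.2]⟩)
    · -- bound
      rw [ae_restrict_iff' measurableSet_Ioc]
      filter_upwards with s hs
      rcases eq_or_lt_of_le hs.2 with heq | hlt
      · subst heq
        simp [Real.zero_rpow (by linarith : -a ≠ 0),
          Real.zero_rpow (by linarith : -a - 1 ≠ 0)]
      · have hts : 0 < t₁ - s := by linarith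
        have hK : (0:ℝ) ≤ (t₁ - s) ^ (-a - 1) := Real.rpow_nonneg (le_of_lt hts) _
        have hfb : |f t₁ - f s| ≤ C * (t₁ - s) := by
          have := lipschitzOnWith_iff_dist_le_mul.mp hlip t₁ (by constructor <;> linarith)
            s (by constructor <;> [linarith [hs.1]; linarith])
          rw [Real.dist_eq, Real.dist_eq] at this
          simpa [abs_of_pos hts] using this
        have key : (t₁ - s) ^ (-a) = (t₁ - s) ^ (-a - 1) * (t₁ - s) := by
          have h := Real.rpow_add hts (-a - 1) 1
          rw [Real.rpow_one] at h
          rw [← h]; norm_num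
        have hrn : (0:ℝ) ≤ (t₁ - s) ^ (-a) := Real.rpow_nonneg (le_of_lt hts) _
        rw [Real.norm_eq_abs, Real.norm_eq_abs, abs_mul, abs_mul,
          abs_of_pos ha, abs_of_nonneg hK]
        rw [abs_of_nonneg (by positivity : (0:ℝ) ≤ a * (C:ℝ) * (t₁ - s) ^ (-a))]
        calc a * (t₁ - s) ^ (-a - 1) * |f t₁ - f s|
            ≤ a * (t₁ - s) ^ (-a - 1) * ((C:ℝ) * (t₁ - s)) := by
              apply mul_le_mul_of_nonneg_left hfb (by positivity)
          _ = a * (C:ℝ) * (t₁ - s) ^ (-a) := by rw [key]; ring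

lemma deriv_nonpos_of_leftMin {u : ℝ → ℝ} {t₁ d : ℝ} (ht : 0 < t₁)
    (hd : HasDerivAt u d t₁) (hmin : ∀ s, 0 ≤ s → s < t₁ → u t₁ ≤ u s) : d ≤ 0 := by
  rw [hasDerivAt_iff_tendsto_slope] at hd
  have hne : Filter.NeBot (𝓝[Ioo 0 t₁] t₁) := by
    rw [← mem_closure_iff_nhdsWithin_neBot, closure_Ioo (ne_of_lt ht)]
    exact ⟨le_of_lt ht, le_refl _⟩
  have hle : 𝓝[Ioo 0 t₁] t₁ ≤ 𝓝[≠] t₁ :=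
    nhdsWithin_mono t₁ (fun s hs => ne_of_lt hs.2)
  refine le_of_tendsto (hd.mono_left hle) ?_
  filter_upwards [eventually_mem_nhdsWithin] with s hs
  rw [slope_def_field]
  exact div_nonpos_of_nonneg_of_nonpos
    (by linarith [hmin s (le_of_lt hs.1) hs.2]) (by linarith [hs.2])

lemma caputoR_diff_neg {a t₁ σ : ℝ} {w E : ℝ → ℝ}
    (ha : 0 < a) (ha1 : a < 1) (ht : 0 < t₁)
    (hIw : IntervalIntegrable (fun s => a * (t₁ - s) ^ (-a - 1) * (w t₁ - w s)) volume 0 t₁)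
    (hIE : IntervalIntegrable (fun s => a * (t₁ - s) ^ (-a - 1) * (E t₁ - E s)) volume 0 t₁)
    (hσ : 0 < σ)
    (hmin : ∀ s ∈ Icc (0:ℝ) t₁,
      E t₁ + σ * (1 + t₁) - w t₁ ≤ E s + σ * (1 + s) - w s)
    (h0 : E t₁ + σ * (1 + t₁) - w t₁ < 0)
    (hu0 : σ ≤ E 0 + σ * (1 + 0) - w 0) :
    caputoR a E t₁ - caputoR a w t₁ < 0 := by
  have hΓ : 0 < Real.Gamma (1 - a) := Real.Gamma_pos_of_pos (by linarith)
  have hc : 0 < 1 / Real.Gamma (1 - a) := by positivity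
  unfold caputoR
  rw [← mul_sub]
  apply mul_neg_of_pos_of_neg hc
  have hII : (∫ s in (0:ℝ)..t₁, a * (t₁ - s) ^ (-a - 1) * (E t₁ - E s))
      - (∫ s in (0:ℝ)..t₁, a * (t₁ - s) ^ (-a - 1) * (w t₁ - w s))
      = ∫ s in (0:ℝ)..t₁, a * (t₁ - s) ^ (-a - 1) * ((E t₁ - w t₁) - (E s - w s)) := by
    rw [← integral_sub hIE hIw]
    apply integral_congr
    intro s _
    ring
  have hIneg : (∫ s in (0:ℝ)..t₁, a * (t₁ - s) ^ (-a - 1) * ((E t₁ - w t₁) - (E s - w s))) ≤ 0 := by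
    have h1 : (0:ℝ) ≤ ∫ s in (0:ℝ)..t₁,
        -(a * (t₁ - s) ^ (-a - 1) * ((E t₁ - w t₁) - (E s - w s))) := by
      apply integral_nonneg ht.le
      intro s hs
      have hK : (0:ℝ) ≤ (t₁ - s) ^ (-a - 1) := Real.rpow_nonneg (by linarith [hs.2]) _
      have hφ : (E t₁ - w t₁) - (E s - w s) ≤ 0 := by
        have := hmin s hs
        nlinarith [hs.2]
      nlinarith [mul_nonneg (le_of_lt ha) hK]
    rw [intervalIntegral.integral_neg] at h1
    linarith
  have hX : t₁ ^ (-a) * (E t₁ - E 0) - t₁ ^ (-a) * (w t₁ - w 0)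
      = t₁ ^ (-a) * ((E t₁ - w t₁) - (E 0 - w 0)) := by ring
  have htp : (0:ℝ) < t₁ ^ (-a) := Real.rpow_pos_of_pos ht _
  have hXneg : t₁ ^ (-a) * ((E t₁ - w t₁) - (E 0 - w 0)) < 0 := by
    apply mul_neg_of_pos_of_neg htp
    nlinarith
  calc t₁ ^ (-a) * (E t₁ - E 0) + (∫ s in (0:ℝ)..t₁, a * (t₁ - s) ^ (-a - 1) * (E t₁ - E s))
      - (t₁ ^ (-a) * (w t₁ - w 0) + ∫ s in (0:ℝ)..t₁, a * (t₁ - s) ^ (-a - 1) * (w t₁ - w s))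
      = t₁ ^ (-a) * ((E t₁ - w t₁) - (E 0 - w 0))
        + ∫ s in (0:ℝ)..t₁, a * (t₁ - s) ^ (-a - 1) * ((E t₁ - w t₁) - (E s - w s)) := by
        rw [← hII]; ring
    _ < 0 := by linarith


lemma caputoD_neg (a : ℝ) (w : ℝ → ℝ) (t : ℝ) :
    caputoD a (fun s => -w s) t = -caputoD a w t := by
  by_cases hai : a = 1
  · simp only [caputoD, if_pos hai]
    exact deriv.neg
  · simp only [caputoD, if_neg hai, caputoR]
    rw [show (fun s => a * (t - s) ^ (-a - 1) * (-w t - -w s))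
        = fun s => -(a * (t - s) ^ (-a - 1) * (w t - w s)) from funext (fun s => by ring)]
    rw [intervalIntegral.integral_neg]
    ring

lemma key (T : ℝ) (hT : 0 < T) (ℓ : ℕ) (α : Fin ℓ → ℝ)
    (hα_pos : ∀ i, 0 < α i) (hα_le1 : ∀ i, α i ≤ 1)
    (q : Fin ℓ → ℝ → ℝ)
    (hq_nonneg : ∀ i, ∀ t ∈ Icc (0:ℝ) T, 0 ≤ q i t)
    (hq_sum : ∀ t ∈ Icc (0:ℝ) T, 0 < ∑ i, q i t)
    (lam : ℝ) (hlam : 0 ≤ lam)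
    (w E : ℝ → ℝ)
    (hw_cont : ContinuousOn w (Icc 0 T)) (hE_cont : ContinuousOn E (Icc 0 T))
    (hw_lip : ∀ ε t : ℝ, 0 < ε → ε < t → t ≤ T → ∃ C : NNReal, LipschitzOnWith C w (Icc ε t))
    (hE_lip : ∀ ε t : ℝ, 0 < ε → ε < t → t ≤ T → ∃ C : NNReal, LipschitzOnWith C E (Icc ε t))
    (h0 : w 0 ≤ E 0)
    (hineq : ∀ t ∈ Ioc (0:ℝ) T,
      0 ≤ (∑ i, q i t * (caputoD (α i) E t - caputoD (α i) w t)) + lam * (E t - w t)) :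
    ∀ t ∈ Icc (0:ℝ) T, w t ≤ E t := by
  suffices hσall : ∀ σ : ℝ, 0 < σ → ∀ t ∈ Icc (0:ℝ) T, w t ≤ E t + σ * (1 + t) by
    intro t htmem
    by_contra hcon
    push_neg at hcon
    have h1t : (0:ℝ) < 1 + t := by linarith [htmem.1]
    have hσpos : 0 < (w t - E t) / (2 * (1 + t)) := div_pos (by linarith) (by linarith)
    have := hσall _ hσpos t htmem
    have hmul : (w t - E t) / (2 * (1 + t)) * (1 + t) = (w t - E t) / 2 := by
      field_simp
    rw [hmul] at this
    linarith
  intro σ hσ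
  by_contra hcon
  push_neg at hcon
  obtain ⟨t₀, ht₀mem, ht₀⟩ := hcon
  set u : ℝ → ℝ := fun t => E t + σ * (1 + t) - w t with hu_def
  have hu_cont : ContinuousOn u (Icc 0 T) := by
    apply ContinuousOn.sub _ hw_cont
    exact hE_cont.add (continuous_const.mul (continuous_const.add continuous_id)).continuousOn
  have hut₀ : u t₀ < 0 := by simp only [hu_def]; linarith
  have hu0 : σ ≤ u 0 := by simp only [hu_def]; simp; linarith
  -- positivity of u near 0
  obtain ⟨δ, hδpos, hδ⟩ := Metric.continuousWithinAt_iff.mp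
    (hu_cont 0 ⟨le_refl 0, hT.le⟩) σ hσ
  set d0 : ℝ := min (δ/2) (T/2) with hd0_def
  have hd0pos : 0 < d0 := lt_min (by linarith) (by linarith)
  have hd0T : d0 < T := lt_of_le_of_lt (min_le_right _ _) (by linarith)
  have hupos : ∀ s ∈ Icc (0:ℝ) T, s ≤ d0 → 0 ≤ u s := by
    intro s hs hsd
    have hd : dist s 0 < δ := by
      rw [Real.dist_eq, sub_zero, abs_of_nonneg hs.1]
      have : d0 ≤ δ/2 := min_le_left _ _
      linarith
    have := hδ hs hd
    rw [Real.dist_eq] at this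
    have := abs_lt.mp this
    linarith [this.1]
  -- hitting times
  have hτ : ∀ m' : ℝ, m' ∈ Ioo (u t₀) (0:ℝ) → ∃ t₁ : ℝ,
      d0 < t₁ ∧ t₁ < T ∧ u t₁ = m' ∧ ∀ s, 0 ≤ s → s ≤ t₁ → u t₁ ≤ u s := by
    intro m' hm'
    set A : Set ℝ := Icc 0 t₀ ∩ u ⁻¹' (Iic m') with hA_def
    have hA_closed : IsClosed A :=
      (hu_cont.mono (Icc_subset_Icc le_rfl ht₀mem.2)).preimage_isClosed_of_isClosed
        isClosed_Icc isClosed_Iic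
    have hA_ne : t₀ ∈ A := ⟨⟨ht₀mem.1, le_rfl⟩, le_of_lt hm'.1⟩
    have hA_bdd : BddBelow A := ⟨0, fun x hx => hx.1.1⟩
    set τ := sInf A with hτ_def
    have hτ_mem : τ ∈ A := hA_closed.csInf_mem ⟨t₀, hA_ne⟩ hA_bdd
    have hτ0 : 0 ≤ τ := hτ_mem.1.1
    have hτt₀ : τ ≤ t₀ := hτ_mem.1.2
    have hτT : τ ≤ T := le_trans hτt₀ ht₀mem.2
    have huτ : u τ ≤ m' := hτ_mem.2
    have hτd0 : d0 < τ := by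
      by_contra hc
      push_neg at hc
      have := hupos τ ⟨hτ0, hτT⟩ hc
      linarith [hm'.2]
    have hbefore : ∀ s, 0 ≤ s → s < τ → m' < u s := by
      intro s hs0 hsτ
      have hnot : s ∉ A := notMem_of_lt_csInf hsτ hA_bdd
      by_contra hc
      push_neg at hc
      exact hnot ⟨⟨hs0, le_trans hsτ.le hτt₀⟩, hc⟩
    have hueq : u τ = m' := by
      refine le_antisymm huτ ?_
      have hne : Filter.NeBot (𝓝[Ico 0 τ] τ) := by
        rw [← mem_closure_iff_nhdsWithin_neBot, closure_Ico (by linarith : (0:ℝ) ≠ τ)]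
        exact ⟨hτ0, le_refl _⟩
      have htd : Tendsto u (𝓝[Ico 0 τ] τ) (𝓝 (u τ)) :=
        (hu_cont τ ⟨hτ0, hτT⟩).mono_left
          (nhdsWithin_mono τ (fun x hx => ⟨hx.1, le_trans hx.2.le hτT⟩))
      refine ge_of_tendsto htd ?_
      filter_upwards [eventually_mem_nhdsWithin] with s hs
      exact (hbefore s hs.1 hs.2).le
    have hτltt₀ : τ < t₀ := by
      rcases lt_or_eq_of_le hτt₀ with h | h
      · exact h
      · exfalso; rw [h] at hueq; linarith [hm'.1]
    refine ⟨τ, hτd0, lt_of_lt_of_le hτltt₀ ht₀mem.2, hueq, ?_⟩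
    intro s hs0 hsτ
    rcases lt_or_eq_of_le hsτ with h | h
    · rw [hueq]; exact (hbefore s hs0 h).le
    · rw [h]
  choose! τf hτ1 hτ2 hτ3 hτ4 using hτ
  -- Rademacher setup
  set dm : ℝ := d0 / 2 with hdm_def
  have hdm_pos : 0 < dm := by positivity
  have hdmT : dm < T := by linarith
  obtain ⟨Cw, hCw⟩ := hw_lip dm T hdm_pos hdmT le_rfl
  obtain ⟨CE, hCE⟩ := hE_lip dm T hdm_pos hdmT le_rfl
  have haew := hCw.ae_differentiableWithinAt_of_mem (μ := volume)
  have haeE := hCE.ae_differentiableWithinAt_of_mem (μ := volume)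
  have hae := haew.and haeE
  rw [ae_iff] at hae
  -- Lipschitz bound for u
  set K : NNReal := CE + Cw + Real.toNNReal σ with hK_def
  have hulip : LipschitzOnWith K u (Icc dm T) := by
    rw [lipschitzOnWith_iff_dist_le_mul]
    intro x hx y hy
    have h1 := lipschitzOnWith_iff_dist_le_mul.mp hCw x hx y hy
    have h2 := lipschitzOnWith_iff_dist_le_mul.mp hCE x hx y hy
    rw [Real.dist_eq] at h1 h2 ⊢
    rw [Real.dist_eq] at h1 h2 ⊢
    have hKc : (K:ℝ) = (CE:ℝ) + (Cw:ℝ) + σ := by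
      rw [hK_def]; push_cast [Real.coe_toNNReal _ hσ.le]; ring
    rw [hKc]
    have hux : u x - u y = (E x - E y) + σ * (x - y) - (w x - w y) := by
      simp only [hu_def]; ring
    calc |u x - u y| ≤ |E x - E y| + σ * |x - y| + |w x - w y| := by
          rw [hux]
          calc |E x - E y + σ * (x - y) - (w x - w y)|
              ≤ |E x - E y + σ * (x - y)| + |w x - w y| := abs_sub _ _
            _ ≤ |E x - E y| + |σ * (x - y)| + |w x - w y| := by
                linarith [abs_add_le (E x - E y) (σ * (x - y))]
            _ = |E x - E y| + σ * |x - y| + |w x - w y| := by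
                rw [abs_mul, abs_of_pos hσ]
      _ ≤ ((CE:ℝ) + (Cw:ℝ) + σ) * |x - y| := by nlinarith [abs_nonneg (x - y)]
  by_cases hex : ∃ m' ∈ Ioo (u t₀) (0:ℝ),
      (τf m' ∈ Icc dm T → DifferentiableWithinAt ℝ w (Icc dm T) (τf m')) ∧
      (τf m' ∈ Icc dm T → DifferentiableWithinAt ℝ E (Icc dm T) (τf m'))
  · obtain ⟨m', hm', hGw, hGE⟩ := hex
    set t₁ := τf m' with ht₁_def
    have ht1a : d0 < t₁ := hτ1 m' hm'
    have ht1b : t₁ < T := hτ2 m' hm'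
    have hut₁ : u t₁ = m' := hτ3 m' hm'
    have hmin : ∀ s, 0 ≤ s → s ≤ t₁ → u t₁ ≤ u s := hτ4 m' hm'
    have ht1pos : 0 < t₁ := lt_trans hd0pos ht1a
    have ht1T : t₁ ≤ T := ht1b.le
    have ht1m : t₁ ∈ Icc dm T := ⟨by linarith, ht1T⟩
    have hnbd : Icc dm T ∈ 𝓝 t₁ := Icc_mem_nhds (by linarith) ht1b
    have hdw : DifferentiableAt ℝ w t₁ := (hGw ht1m).differentiableAt hnbd
    have hdE : DifferentiableAt ℝ E t₁ := (hGE ht1m).differentiableAt hnbd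
    have hu' : HasDerivAt u (deriv E t₁ + σ * 1 - deriv w t₁) t₁ := by
      exact (hdE.hasDerivAt.add (((hasDerivAt_id t₁).const_add (1:ℝ)).const_mul σ)).sub
        hdw.hasDerivAt
    have hder : deriv E t₁ + σ * 1 - deriv w t₁ ≤ 0 :=
      deriv_nonpos_of_leftMin ht1pos hu' (fun s h1 h2 => hmin s h1 h2.le)
    have hneg : ∀ i, caputoD (α i) E t₁ - caputoD (α i) w t₁ < 0 := by
      intro i
      by_cases hai : α i = 1
      · simp only [caputoD, if_pos hai]
        linarith
      · simp only [caputoD, if_neg hai]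
        have ha1 : α i < 1 := lt_of_le_of_ne (hα_le1 i) hai
        obtain ⟨Cw', hCw'⟩ := hw_lip (t₁/2) t₁ (by linarith) (by linarith) ht1T
        obtain ⟨CE', hCE'⟩ := hE_lip (t₁/2) t₁ (by linarith) (by linarith) ht1T
        refine caputoR_diff_neg (hα_pos i) ha1 ht1pos
          (kernelIntegrable (hα_pos i) ha1 ht1pos ht1T hw_cont Cw' hCw')
          (kernelIntegrable (hα_pos i) ha1 ht1pos ht1T hE_cont CE' hCE')
          hσ ?_ ?_ ?_
        · intro s hs
          have := hmin s hs.1 hs.2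
          simp only [hu_def] at this
          linarith
        · have : u t₁ < 0 := by rw [hut₁]; exact hm'.2
          simp only [hu_def] at this
          linarith
        · simp only [hu_def] at hu0
          linarith
    have hmem1 : t₁ ∈ Icc (0:ℝ) T := ⟨ht1pos.le, ht1T⟩
    have hsumq := hq_sum t₁ hmem1
    obtain ⟨j, -, hj⟩ := Finset.exists_lt_of_sum_lt
      (by simpa using hsumq : ∑ i : Fin ℓ, (0:ℝ) < ∑ i, q i t₁)
    have hsum : (∑ i, q i t₁ * (caputoD (α i) E t₁ - caputoD (α i) w t₁)) < 0 := by
      have := Finset.sum_lt_sum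
        (f := fun i => q i t₁ * (caputoD (α i) E t₁ - caputoD (α i) w t₁))
        (g := fun _ => (0:ℝ))
        (fun i _ => mul_nonpos_of_nonneg_of_nonpos (hq_nonneg i t₁ hmem1) (hneg i).le)
        ⟨j, Finset.mem_univ j, mul_neg_of_pos_of_neg hj (hneg j)⟩
      simpa using this
    have hEw : E t₁ - w t₁ < 0 := by
      have : u t₁ < 0 := by rw [hut₁]; exact hm'.2
      simp only [hu_def] at this
      nlinarith
    have hlamterm : lam * (E t₁ - w t₁) ≤ 0 :=
      mul_nonpos_of_nonneg_of_nonpos hlam hEw.le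
    have := hineq t₁ ⟨ht1pos, ht1T⟩
    linarith
  · -- measure-theoretic contradiction
    exfalso
    set S : Set ℝ := τf '' (Ioo (u t₀) 0) with hS_def
    have hS_sub : S ⊆ Icc dm T := by
      rintro x ⟨m', hm', rfl⟩
      exact ⟨by linarith [hτ1 m' hm'], (hτ2 m' hm').le⟩
    have hS_bad : S ⊆ {x | ¬((x ∈ Icc dm T → DifferentiableWithinAt ℝ w (Icc dm T) x) ∧
        (x ∈ Icc dm T → DifferentiableWithinAt ℝ E (Icc dm T) x))} := by
      rintro x ⟨m', hm', rfl⟩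
      intro hc
      exact hex ⟨m', hm', hc.1, hc.2⟩
    have hS_null : volume S = 0 :=
      le_antisymm (le_trans (measure_mono hS_bad) (le_of_eq hae)) zero_le
    have him_sub : Ioo (u t₀) (0:ℝ) ⊆ u '' S := by
      intro m' hm'
      exact ⟨τf m', ⟨m', hm', rfl⟩, hτ3 m' hm'⟩
    have hmeas_le : volume (u '' S) ≤ (K : ℝ≥0∞) ^ (1:ℝ) * volume S := by
      have := (hulip.mono hS_sub).hausdorffMeasure_image_le (d := 1) zero_le_one
      rwa [MeasureTheory.hausdorffMeasure_real] at this
    have h1 : volume (Ioo (u t₀) (0:ℝ)) = 0 := by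
      refine le_antisymm ?_ zero_le
      calc volume (Ioo (u t₀) (0:ℝ)) ≤ volume (u '' S) := measure_mono him_sub
        _ ≤ (K : ℝ≥0∞) ^ (1:ℝ) * volume S := hmeas_le
        _ = 0 := by rw [hS_null, mul_zero]
    rw [Real.volume_Ioo] at h1
    have : (0:ℝ) < 0 - u t₀ := by linarith
    rw [ENNReal.ofReal_eq_zero] at h1
    linarith



theorem barrier_bound_multiterm_IVP
    (T : ℝ) (hT : 0 < T)
    (ℓ : ℕ) (hℓ : 1 ≤ ℓ)
    (α : Fin ℓ → ℝ)
    (hα_pos : ∀ i, 0 < α i)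
    (hα_le1 : ∀ i, α i ≤ 1)
    (hα_dec : ∀ i j : Fin ℓ, i < j → α j < α i)
    (q : Fin ℓ → ℝ → ℝ)
    (hq_cont : ∀ i, ContinuousOn (q i) (Icc 0 T))
    (hq_nonneg : ∀ i, ∀ t ∈ Icc (0:ℝ) T, 0 ≤ q i t)
    (hq_sum : ∀ t ∈ Icc (0:ℝ) T, 0 < ∑ i, q i t)
    (lam : ℝ) (hlam : 0 ≤ lam)
    (v : ℝ → ℝ) (w₀ : ℝ)
    (w E : ℝ → ℝ)
    (hw_cont : ContinuousOn w (Icc 0 T))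
    (hE_cont : ContinuousOn E (Icc 0 T))
    (hw_lip : ∀ ε t : ℝ, 0 < ε → ε < t → t ≤ T →
      ∃ C : NNReal, LipschitzOnWith C w (Icc ε t))
    (hE_lip : ∀ ε t : ℝ, 0 < ε → ε < t → t ≤ T →
      ∃ C : NNReal, LipschitzOnWith C E (Icc ε t))
    (hw0 : w 0 = w₀)
    (heq : ∀ t ∈ Ioc (0:ℝ) T,
      (∑ i, q i t * caputoD (α i) w t) + lam * w t = v t)
    (hE0 : |w₀| ≤ E 0)
    (hE : ∀ t ∈ Ioc (0:ℝ) T,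
      |v t| ≤ (∑ i, q i t * caputoD (α i) E t) + lam * E t) :
    ∀ t ∈ Icc (0:ℝ) T, |w t| ≤ E t := by
  have hup : ∀ t ∈ Icc (0:ℝ) T, w t ≤ E t := by
    apply key T hT ℓ α hα_pos hα_le1 q hq_nonneg hq_sum lam hlam w E
      hw_cont hE_cont hw_lip hE_lip
    · rw [hw0]; exact le_trans (le_abs_self w₀) hE0
    · intro t ht
      have h1 := heq t ht
      have h2 := hE t ht
      have hsplit : (∑ i, q i t * (caputoD (α i) E t - caputoD (α i) w t))
          = (∑ i, q i t * caputoD (α i) E t) - (∑ i, q i t * caputoD (α i) w t) := by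
        rw [← Finset.sum_sub_distrib]
        exact Finset.sum_congr rfl (fun i _ => by ring)
      rw [hsplit]
      linarith [le_abs_self (v t)]
  have hdown : ∀ t ∈ Icc (0:ℝ) T, -w t ≤ E t := by
    have := key T hT ℓ α hα_pos hα_le1 q hq_nonneg hq_sum lam hlam
      (fun s => -w s) E (hw_cont.neg) hE_cont ?_ hE_lip ?_ ?_
    · intro t ht
      simpa using this t ht
    · intro ε t hε hεt htT
      obtain ⟨C, hC⟩ := hw_lip ε t hε hεt htT
      refine ⟨C, ?_⟩
      rw [lipschitzOnWith_iff_dist_le_mul] at hC ⊢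
      intro x hx y hy
      have := hC x hx y hy
      rw [Real.dist_eq] at this ⊢
      rw [Real.dist_eq] at this ⊢
      calc |-w x - -w y| = |w x - w y| := by rw [← abs_neg]; ring_nf
        _ ≤ C * |x - y| := this
    · rw [hw0]
      linarith [neg_abs_le w₀, hE0]
    · intro t ht
      have h1 := heq t ht
      have h2 := hE t ht
      have hsplit : (∑ i, q i t * (caputoD (α i) E t - caputoD (α i) (fun s => -w s) t))
          = (∑ i, q i t * caputoD (α i) E t) + (∑ i, q i t * caputoD (α i) w t) := by
        rw [← Finset.sum_add_distrib]
        refine Finset.sum_congr rfl (fun i _ => ?_)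
        rw [caputoD_neg]
        ring
      rw [hsplit]
      linarith [neg_abs_le (v t)]
  intro t ht
  rw [abs_le]
  exact ⟨by linarith [hdown t ht], hup t ht⟩
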